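/- arXiv:1806.06289 — 2 statements merged into one kernel-verified Lean document; each statement's English description precedes it below -/
import Mathlib

section
/- The two smooth plane quartic curves over ℚ defined by f = x³y + x³z + x²y² − 2x²yz − 4x²z² − 4xy³ + xz³ + 2y⁴ − 2yz³ + z⁴ and g = x⁴ + x³y + 2x³z + 4x²y² − xy³ − 2xy²z + y⁴ + 3y³z + 5y²z² + 4yz³ + 2z⁴ are isomorphic over ℚ(i): substituting (x, y, z) ↦ (z, ix, (1−i)x/2 − y) into g yields a nonzero ℚ(i)-scalar multiple of f (in fact the substitution map and its stated inverse (x,y,z) ↦ (iy, (1+i)y/2 + z, −x) are mutually inverse linear maps). -/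
open MvPolynomial Complex

/-- The smooth plane quartics `f = 0` and `g = 0` become isomorphic over `ℚ(i) ⊆ ℂ`:
substituting `(x,y,z) ↦ (z, ix, (1−i)x/2 − y)` into `g` yields a nonzero scalar multiple
of `f`, and the substitution matrix and its stated inverse `(x,y,z) ↦ (iy, (1+i)y/2+z, −x)`
are mutually inverse as projective linear maps (their products are a nonzero scalar times
the identity). -/
theorem stmt_7 :
    (∃ c : ℂ, c ≠ 0 ∧
      bind₁ (![X 2, C I * X 0, C ((1 - I) / 2) * X 0 - X 1] : Fin 3 → MvPolynomial (Fin 3) ℂ)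
        (X 0 ^ 4 + X 0 ^ 3 * X 1 + 2 * X 0 ^ 3 * X 2 + 4 * X 0 ^ 2 * X 1 ^ 2
          - X 0 * X 1 ^ 3 - 2 * X 0 * X 1 ^ 2 * X 2 + X 1 ^ 4 + 3 * X 1 ^ 3 * X 2
          + 5 * X 1 ^ 2 * X 2 ^ 2 + 4 * X 1 * X 2 ^ 3 + 2 * X 2 ^ 4 :
          MvPolynomial (Fin 3) ℂ) =
      C c * (X 0 ^ 3 * X 1 + X 0 ^ 3 * X 2 + X 0 ^ 2 * X 1 ^ 2 - 2 * X 0 ^ 2 * X 1 * X 2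
        - 4 * X 0 ^ 2 * X 2 ^ 2 - 4 * X 0 * X 1 ^ 3 + X 0 * X 2 ^ 3 + 2 * X 1 ^ 4
        - 2 * X 1 * X 2 ^ 3 + X 2 ^ 4)) ∧
    (∃ c' : ℂ, c' ≠ 0 ∧
      (!![0, 0, 1; I, 0, 0; (1 - I) / 2, -1, 0] : Matrix (Fin 3) (Fin 3) ℂ) *
        !![0, I, 0; 0, (1 + I) / 2, 1; -1, 0, 0] = c' • (1 : Matrix (Fin 3) (Fin 3) ℂ) ∧
      (!![0, I, 0; 0, (1 + I) / 2, 1; -1, 0, 0] : Matrix (Fin 3) (Fin 3) ℂ) *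
        !![0, 0, 1; I, 0, 0; (1 - I) / 2, -1, 0] = c' • (1 : Matrix (Fin 3) (Fin 3) ℂ)) := by
  constructor
  · refine ⟨1, one_ne_zero, ?_⟩
    apply MvPolynomial.funext
    intro v
    simp only [map_add, map_sub, map_mul, map_pow, map_ofNat, bind₁_X_right,
      Matrix.cons_val_zero, Matrix.cons_val_one, Matrix.head_cons, Matrix.cons_val_two,
      Matrix.tail_cons, eval_X, eval_C, map_one]
    linear_combination (3/8*(v 0)^4*I^2 + 4*(v 0)^2*(v 2)^2 - (v 0)^3*(v 2)
      + 2*(v 0)^2*(v 1)*(v 2) + 1/8*(v 0)^4 - 2*(v 0)^3*(v 1)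
      + 2*(v 0)^2*(v 1)^2) * Complex.I_sq
  · refine ⟨-1, by norm_num, ?_, ?_⟩ <;>
    · ext i j
      fin_cases i <;> fin_cases j <;>
        simp [Matrix.mul_apply, Fin.sum_univ_succ, Matrix.one_apply] <;>
        first
          | linear_combination (-1 : ℂ) * Complex.I_sq
          | linear_combination (-(1:ℂ)/2) * Complex.I_sq
          | linear_combination ((1:ℂ)/2) * Complex.I_sq
          | ring
end

section
/- The group GL₃(ℤ) is generated by the four matrices A₁ = [[1,1,0],[0,1,0],[0,0,1]], A₂ = [[0,1,0],[−1,0,0],[0,0,1]], A₃ = [[−1,0,0],[0,1,0],[0,0,1]], and A₄ = [[0,0,−1],[1,0,0],[0,1,0]]. -/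
open Matrix

namespace Stmt12Aux

abbrev GLZ := GL (Fin 3) ℤ

/-- entries of a GL element as a matrix -/
@[simp] lemma val_mul' (a b : GLZ) : ((a*b : GLZ) : Matrix (Fin 3) (Fin 3) ℤ) = (a : Matrix (Fin 3) (Fin 3) ℤ) * b := rfl

structure Gens (H : Subgroup GLZ) : Prop where
  tv : ∀ i j : Fin 3, i ≠ j → ∀ a : ℤ, ∃ w ∈ H, (w : Matrix (Fin 3) (Fin 3) ℤ) = transvection i j a
  s0 : ∃ w ∈ H, (w : Matrix (Fin 3) (Fin 3) ℤ) = !![-1,0,0;0,1,0;0,0,1]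
  s1 : ∃ w ∈ H, (w : Matrix (Fin 3) (Fin 3) ℤ) = !![1,0,0;0,-1,0;0,0,1]
  s2 : ∃ w ∈ H, (w : Matrix (Fin 3) (Fin 3) ℤ) = !![1,0,0;0,1,0;0,0,-1]
  p01 : ∃ w ∈ H, (w : Matrix (Fin 3) (Fin 3) ℤ) = !![0,1,0;1,0,0;0,0,1]
  p02 : ∃ w ∈ H, (w : Matrix (Fin 3) (Fin 3) ℤ) = !![0,0,1;0,1,0;1,0,0]
  p12 : ∃ w ∈ H, (w : Matrix (Fin 3) (Fin 3) ℤ) = !![1,0,0;0,0,1;0,1,0]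

variable {H : Subgroup GLZ}

/-- if `w * g = 1` on matrices and `w ∈ H` then `g ∈ H` -/
lemma mem_of_cancel {w g : GLZ} (hw : w ∈ H)
    (h : (w : Matrix (Fin 3) (Fin 3) ℤ) * (g : Matrix (Fin 3) (Fin 3) ℤ) = 1) : g ∈ H := by
  have hwg : w * g = 1 := Units.ext (by simpa using h)
  have : g = w⁻¹ := by
    have := congrArg (w⁻¹ * ·) hwg
    simpa [mul_assoc] using this
  rw [this]; exact inv_mem hw

lemma mem_of_mul_mem {w g : GLZ} (hw : w ∈ H) (hwg : w * g ∈ H) : g ∈ H := by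
  have : g = w⁻¹ * (w * g) := by group
  rw [this]; exact mul_mem (inv_mem hw) hwg

end Stmt12Aux

namespace Stmt12Aux

lemma tv01 (a : ℤ) : transvection (0:Fin 3) 1 a = !![1,a,0;0,1,0;0,0,1] := by
  ext i j; fin_cases i <;> fin_cases j <;>
    simp [transvection, Matrix.single, one_apply, vecHead, vecTail]
lemma tv02 (a : ℤ) : transvection (0:Fin 3) 2 a = !![1,0,a;0,1,0;0,0,1] := by
  ext i j; fin_cases i <;> fin_cases j <;>
    simp [transvection, Matrix.single, one_apply, vecHead, vecTail]
lemma tv10 (a : ℤ) : transvection (1:Fin 3) 0 a = !![1,0,0;a,1,0;0,0,1] := by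
  ext i j; fin_cases i <;> fin_cases j <;>
    simp [transvection, Matrix.single, one_apply, vecHead, vecTail]
lemma tv12 (a : ℤ) : transvection (1:Fin 3) 2 a = !![1,0,0;0,1,a;0,0,1] := by
  ext i j; fin_cases i <;> fin_cases j <;>
    simp [transvection, Matrix.single, one_apply, vecHead, vecTail]
lemma tv20 (a : ℤ) : transvection (2:Fin 3) 0 a = !![1,0,0;0,1,0;a,0,1] := by
  ext i j; fin_cases i <;> fin_cases j <;>
    simp [transvection, Matrix.single, one_apply, vecHead, vecTail]
lemma tv21 (a : ℤ) : transvection (2:Fin 3) 1 a = !![1,0,0;0,1,0;0,a,1] := by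
  ext i j; fin_cases i <;> fin_cases j <;>
    simp [transvection, Matrix.single, one_apply, vecHead, vecTail]

lemma tv_family {H : Subgroup GLZ} (i j : Fin 3) (hij : i ≠ j) {p q : GLZ}
    (hp : p ∈ H) (hq : q ∈ H)
    (hpm : (p : Matrix (Fin 3) (Fin 3) ℤ) = transvection i j 1)
    (hqm : (q : Matrix (Fin 3) (Fin 3) ℤ) = transvection i j (-1)) :
    ∀ a : ℤ, ∃ w ∈ H, (w : Matrix (Fin 3) (Fin 3) ℤ) = transvection i j a := by
  intro a
  induction a using Int.induction_on with
  | zero => exact ⟨1, one_mem _, by simp⟩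
  | succ n ih =>
    obtain ⟨w, hw, hwm⟩ := ih
    refine ⟨w * p, mul_mem hw hp, ?_⟩
    rw [val_mul', hwm, hpm, transvection_mul_transvection_same i j hij]
  | pred n ih =>
    obtain ⟨w, hw, hwm⟩ := ih
    refine ⟨w * q, mul_mem hw hq, ?_⟩
    rw [val_mul', hwm, hqm, transvection_mul_transvection_same i j hij]
    exact congrArg _ (by ring)
end Stmt12Aux

namespace Stmt12Aux
set_option maxHeartbeats 1000000 in
lemma gens_closure (A1 A2 A3 A4 : GLZ)
    (h1 : (A1 : Matrix (Fin 3) (Fin 3) ℤ) = !![1, 1, 0; 0, 1, 0; 0, 0, 1])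
    (h2 : (A2 : Matrix (Fin 3) (Fin 3) ℤ) = !![0, 1, 0; -1, 0, 0; 0, 0, 1])
    (h3 : (A3 : Matrix (Fin 3) (Fin 3) ℤ) = !![-1, 0, 0; 0, 1, 0; 0, 0, 1])
    (h4 : (A4 : Matrix (Fin 3) (Fin 3) ℤ) = !![0, 0, -1; 1, 0, 0; 0, 1, 0]) :
    Gens (Subgroup.closure {A1, A2, A3, A4}) := by
  set H := Subgroup.closure {A1, A2, A3, A4} with hH
  have m1 : A1 ∈ H := Subgroup.subset_closure (by simp)
  have m2 : A2 ∈ H := Subgroup.subset_closure (by simp)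
  have m3 : A3 ∈ H := Subgroup.subset_closure (by simp)
  have m4 : A4 ∈ H := Subgroup.subset_closure (by simp)
  obtain ⟨swv, msw, hsw⟩ : ∃ w ∈ H, (w : Matrix (Fin 3) (Fin 3) ℤ) = !![0,1,0;1,0,0;0,0,1] :=
    ⟨A2*A3, mul_mem (m2) m3, by simp only [val_mul', h2, h3] <;> norm_num [Matrix.mul_fin_three]⟩
  obtain ⟨cyv, mcy, hcy⟩ : ∃ w ∈ H, (w : Matrix (Fin 3) (Fin 3) ℤ) = !![0,0,1;1,0,0;0,1,0] :=
    ⟨A3*A4, mul_mem (m3) m4, by simp only [val_mul', h3, h4] <;> norm_num [Matrix.mul_fin_three]⟩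
  obtain ⟨w12v, mw12, hw12⟩ : ∃ w ∈ H, (w : Matrix (Fin 3) (Fin 3) ℤ) = !![1,0,0;0,0,1;0,1,0] :=
    ⟨cyv*swv*cyv*cyv, mul_mem (mul_mem (mul_mem (mcy) msw) mcy) mcy, by simp only [val_mul', hcy, hsw] <;> norm_num [Matrix.mul_fin_three]⟩
  obtain ⟨w02v, mw02, hw02⟩ : ∃ w ∈ H, (w : Matrix (Fin 3) (Fin 3) ℤ) = !![0,0,1;0,1,0;1,0,0] :=
    ⟨cyv*cyv*swv*cyv, mul_mem (mul_mem (mul_mem (mcy) mcy) msw) mcy, by simp only [val_mul', hcy, hsw] <;> norm_num [Matrix.mul_fin_three]⟩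
  obtain ⟨d1v, md1, hd1⟩ : ∃ w ∈ H, (w : Matrix (Fin 3) (Fin 3) ℤ) = !![1,0,0;0,-1,0;0,0,1] :=
    ⟨swv*A3*swv, mul_mem (mul_mem (msw) m3) msw, by simp only [val_mul', h3, hsw] <;> norm_num [Matrix.mul_fin_three]⟩
  obtain ⟨d2v, md2, hd2⟩ : ∃ w ∈ H, (w : Matrix (Fin 3) (Fin 3) ℤ) = !![1,0,0;0,1,0;0,0,-1] :=
    ⟨w02v*A3*w02v, mul_mem (mul_mem (mw02) m3) mw02, by simp only [val_mul', h3, hw02] <;> norm_num [Matrix.mul_fin_three]⟩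
  obtain ⟨e10v, me10, he10⟩ : ∃ w ∈ H, (w : Matrix (Fin 3) (Fin 3) ℤ) = !![1,0,0;1,1,0;0,0,1] :=
    ⟨swv*A1*swv, mul_mem (mul_mem (msw) m1) msw, by simp only [val_mul', h1, hsw] <;> norm_num [Matrix.mul_fin_three]⟩
  obtain ⟨e12v, me12, he12⟩ : ∃ w ∈ H, (w : Matrix (Fin 3) (Fin 3) ℤ) = !![1,0,0;0,1,1;0,0,1] :=
    ⟨cyv*A1*cyv*cyv, mul_mem (mul_mem (mul_mem (mcy) m1) mcy) mcy, by simp only [val_mul', h1, hcy] <;> norm_num [Matrix.mul_fin_three]⟩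
  obtain ⟨e20v, me20, he20⟩ : ∃ w ∈ H, (w : Matrix (Fin 3) (Fin 3) ℤ) = !![1,0,0;0,1,0;1,0,1] :=
    ⟨cyv*cyv*A1*cyv, mul_mem (mul_mem (mul_mem (mcy) mcy) m1) mcy, by simp only [val_mul', h1, hcy] <;> norm_num [Matrix.mul_fin_three]⟩
  obtain ⟨e21v, me21, he21⟩ : ∃ w ∈ H, (w : Matrix (Fin 3) (Fin 3) ℤ) = !![1,0,0;0,1,0;0,1,1] :=
    ⟨w02v*A1*w02v, mul_mem (mul_mem (mw02) m1) mw02, by simp only [val_mul', h1, hw02] <;> norm_num [Matrix.mul_fin_three]⟩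
  obtain ⟨e02v, me02, he02⟩ : ∃ w ∈ H, (w : Matrix (Fin 3) (Fin 3) ℤ) = !![1,0,1;0,1,0;0,0,1] :=
    ⟨w12v*A1*w12v, mul_mem (mul_mem (mw12) m1) mw12, by simp only [val_mul', h1, hw12] <;> norm_num [Matrix.mul_fin_three]⟩
  obtain ⟨n01v, mn01, hn01⟩ : ∃ w ∈ H, (w : Matrix (Fin 3) (Fin 3) ℤ) = !![1,-1,0;0,1,0;0,0,1] :=
    ⟨A3*A1*A3, mul_mem (mul_mem (m3) m1) m3, by simp only [val_mul', h1, h3] <;> norm_num [Matrix.mul_fin_three]⟩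
  obtain ⟨n10v, mn10, hn10⟩ : ∃ w ∈ H, (w : Matrix (Fin 3) (Fin 3) ℤ) = !![1,0,0;-1,1,0;0,0,1] :=
    ⟨d1v*e10v*d1v, mul_mem (mul_mem (md1) me10) md1, by simp only [val_mul', hd1, he10] <;> norm_num [Matrix.mul_fin_three]⟩
  obtain ⟨n12v, mn12, hn12⟩ : ∃ w ∈ H, (w : Matrix (Fin 3) (Fin 3) ℤ) = !![1,0,0;0,1,-1;0,0,1] :=
    ⟨d1v*e12v*d1v, mul_mem (mul_mem (md1) me12) md1, by simp only [val_mul', hd1, he12] <;> norm_num [Matrix.mul_fin_three]⟩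
  obtain ⟨n20v, mn20, hn20⟩ : ∃ w ∈ H, (w : Matrix (Fin 3) (Fin 3) ℤ) = !![1,0,0;0,1,0;-1,0,1] :=
    ⟨d2v*e20v*d2v, mul_mem (mul_mem (md2) me20) md2, by simp only [val_mul', hd2, he20] <;> norm_num [Matrix.mul_fin_three]⟩
  obtain ⟨n21v, mn21, hn21⟩ : ∃ w ∈ H, (w : Matrix (Fin 3) (Fin 3) ℤ) = !![1,0,0;0,1,0;0,-1,1] :=
    ⟨d2v*e21v*d2v, mul_mem (mul_mem (md2) me21) md2, by simp only [val_mul', hd2, he21] <;> norm_num [Matrix.mul_fin_three]⟩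
  obtain ⟨n02v, mn02, hn02⟩ : ∃ w ∈ H, (w : Matrix (Fin 3) (Fin 3) ℤ) = !![1,0,-1;0,1,0;0,0,1] :=
    ⟨A3*e02v*A3, mul_mem (mul_mem (m3) me02) m3, by simp only [val_mul', h3, he02] <;> norm_num [Matrix.mul_fin_three]⟩
  constructor
  · intro i j hij a
    fin_cases i <;> fin_cases j
    · exact absurd rfl hij
    · exact tv_family 0 1 (by decide) m1 mn01 (by rw [tv01, h1] <;> norm_num) (by rw [tv01, hn01] <;> norm_num) a
    · exact tv_family 0 2 (by decide) me02 mn02 (by rw [tv02, he02] <;> norm_num) (by rw [tv02, hn02] <;> norm_num) a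
    · exact tv_family 1 0 (by decide) me10 mn10 (by rw [tv10, he10] <;> norm_num) (by rw [tv10, hn10] <;> norm_num) a
    · exact absurd rfl hij
    · exact tv_family 1 2 (by decide) me12 mn12 (by rw [tv12, he12] <;> norm_num) (by rw [tv12, hn12] <;> norm_num) a
    · exact tv_family 2 0 (by decide) me20 mn20 (by rw [tv20, he20] <;> norm_num) (by rw [tv20, hn20] <;> norm_num) a
    · exact tv_family 2 1 (by decide) me21 mn21 (by rw [tv21, he21] <;> norm_num) (by rw [tv21, hn21] <;> norm_num) a
    · exact absurd rfl hij
  · exact ⟨A3, m3, h3⟩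
  · exact ⟨d1v, md1, hd1⟩
  · exact ⟨d2v, md2, hd2⟩
  · exact ⟨swv, msw, hsw⟩
  · exact ⟨w02v, mw02, hw02⟩
  · exact ⟨w12v, mw12, hw12⟩
end Stmt12Aux
namespace Stmt12Aux
variable {H : Subgroup GLZ}

lemma diag_mem (hG : Gens H) {c f : ℤ} (hc : c = 1 ∨ c = -1) (hf : f = 1 ∨ f = -1) :
    ∃ w ∈ H, (w : Matrix (Fin 3) (Fin 3) ℤ) = !![1,0,0;0,c,0;0,0,f] := by
  obtain ⟨u, hu, hum⟩ := hG.s1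
  obtain ⟨v, hv, hvm⟩ := hG.s2
  rcases hc with rfl | rfl <;> rcases hf with rfl | rfl
  · exact ⟨1, one_mem _, by rw [Units.val_one, Matrix.one_fin_three]⟩
  · exact ⟨v, hv, hvm⟩
  · exact ⟨u, hu, hum⟩
  · exact ⟨u*v, mul_mem hu hv, by rw [val_mul', hum, hvm]; norm_num [Matrix.mul_fin_three]⟩

lemma isUnit_det (g : GLZ) : IsUnit ((g : Matrix (Fin 3) (Fin 3) ℤ).det) :=
  (Matrix.isUnit_iff_isUnit_det _).mp g.isUnit

lemma L0 (hG : Gens H) (g : GLZ) (h00 : (g : Matrix (Fin 3) (Fin 3) ℤ) 0 0 = 1)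
    (h10 : (g : Matrix (Fin 3) (Fin 3) ℤ) 1 0 = 0)
    (h20 : (g : Matrix (Fin 3) (Fin 3) ℤ) 2 0 = 0)
    (h21 : (g : Matrix (Fin 3) (Fin 3) ℤ) 2 1 = 0) : g ∈ H := by
  have hd : (g : Matrix (Fin 3) (Fin 3) ℤ).det
      = (g : Matrix (Fin 3) (Fin 3) ℤ) 1 1 * (g : Matrix (Fin 3) (Fin 3) ℤ) 2 2 := by
    rw [Matrix.det_fin_three, h00, h10, h20, h21]; ring
  have hu : IsUnit ((g : Matrix (Fin 3) (Fin 3) ℤ) 1 1 * (g : Matrix (Fin 3) (Fin 3) ℤ) 2 2) := by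
    rw [← hd]; exact isUnit_det g
  have hc : (g : Matrix (Fin 3) (Fin 3) ℤ) 1 1 = 1 ∨ (g : Matrix (Fin 3) (Fin 3) ℤ) 1 1 = -1 :=
    Int.isUnit_iff.mp (isUnit_of_mul_isUnit_left hu)
  have hf : (g : Matrix (Fin 3) (Fin 3) ℤ) 2 2 = 1 ∨ (g : Matrix (Fin 3) (Fin 3) ℤ) 2 2 = -1 :=
    Int.isUnit_iff.mp (isUnit_of_mul_isUnit_right hu)
  have hc2 : (g : Matrix (Fin 3) (Fin 3) ℤ) 1 1 * (g : Matrix (Fin 3) (Fin 3) ℤ) 1 1 = 1 := by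
    rcases hc with h | h <;> rw [h] <;> norm_num
  have hf2 : (g : Matrix (Fin 3) (Fin 3) ℤ) 2 2 * (g : Matrix (Fin 3) (Fin 3) ℤ) 2 2 = 1 := by
    rcases hf with h | h <;> rw [h] <;> norm_num
  obtain ⟨wd, hwd, hwdm⟩ := diag_mem hG hc hf
  obtain ⟨w1, hw1, hw1m⟩ := hG.tv 1 2 (by decide)
    (-((g : Matrix (Fin 3) (Fin 3) ℤ) 1 1 * (g : Matrix (Fin 3) (Fin 3) ℤ) 1 2))
  obtain ⟨w2, hw2, hw2m⟩ := hG.tv 0 1 (by decide) (-((g : Matrix (Fin 3) (Fin 3) ℤ) 0 1))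
  obtain ⟨w3, hw3, hw3m⟩ := hG.tv 0 2 (by decide) (-((g : Matrix (Fin 3) (Fin 3) ℤ) 0 2))
  have hg : (g : Matrix (Fin 3) (Fin 3) ℤ) = !![1, (g : Matrix (Fin 3) (Fin 3) ℤ) 0 1,
      (g : Matrix (Fin 3) (Fin 3) ℤ) 0 2; 0, (g : Matrix (Fin 3) (Fin 3) ℤ) 1 1,
      (g : Matrix (Fin 3) (Fin 3) ℤ) 1 2; 0, 0, (g : Matrix (Fin 3) (Fin 3) ℤ) 2 2] := by
    conv_lhs => rw [Matrix.eta_fin_three (g : Matrix (Fin 3) (Fin 3) ℤ)]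
    rw [h00, h10, h20, h21]
  refine mem_of_cancel (mul_mem (mul_mem (mul_mem hw3 hw2) hw1) hwd) ?_
  rw [val_mul', val_mul', val_mul', hw1m, hw2m, hw3m, hwdm, tv12, tv01, tv02]
  generalize hx : (g : Matrix (Fin 3) (Fin 3) ℤ) 0 1 = x at *
  generalize hy : (g : Matrix (Fin 3) (Fin 3) ℤ) 0 2 = y at *
  generalize hcc : (g : Matrix (Fin 3) (Fin 3) ℤ) 1 1 = c at *
  generalize hdd : (g : Matrix (Fin 3) (Fin 3) ℤ) 1 2 = d at *
  generalize hff : (g : Matrix (Fin 3) (Fin 3) ℤ) 2 2 = f at *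
  rw [hg, Matrix.one_fin_three]
  rcases hc with rfl | rfl <;> rcases hf with rfl | rfl <;>
      norm_num [Matrix.mul_fin_three] <;> ext i j <;> fin_cases i <;> fin_cases j <;>
      simp [vecHead, vecTail] <;> ring
end Stmt12Aux
namespace Stmt12Aux
variable {H : Subgroup GLZ}

lemma natAbs_emod_lt (a b : ℤ) (h : b ≠ 0) : (a % b).natAbs < b.natAbs := by
  have h1 := Int.emod_nonneg a h
  have h2 : a % b < |b| := Int.emod_lt_abs a h
  rcases abs_cases b with ⟨e, _⟩ | ⟨e, _⟩ <;> omega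

lemma eustep (hG : Gens H) (i j : Fin 3) (hij : i ≠ j) (c : Fin 3) (g : GLZ) :
    ∃ w ∈ H,
      (∀ l, ((w * g : GLZ) : Matrix (Fin 3) (Fin 3) ℤ) i l
          = (g : Matrix (Fin 3) (Fin 3) ℤ) i l
            - (g : Matrix (Fin 3) (Fin 3) ℤ) i c / (g : Matrix (Fin 3) (Fin 3) ℤ) j c
              * (g : Matrix (Fin 3) (Fin 3) ℤ) j l) ∧
      (∀ k l, k ≠ i → ((w * g : GLZ) : Matrix (Fin 3) (Fin 3) ℤ) k l
          = (g : Matrix (Fin 3) (Fin 3) ℤ) k l) := by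
  obtain ⟨w, hw, hwm⟩ := hG.tv i j hij
    (-((g : Matrix (Fin 3) (Fin 3) ℤ) i c / (g : Matrix (Fin 3) (Fin 3) ℤ) j c))
  refine ⟨w, hw, fun l => ?_, fun k l hk => ?_⟩
  · rw [val_mul', hwm, Matrix.transvection_mul_apply_same]; ring
  · rw [val_mul', hwm, Matrix.transvection_mul_apply_of_ne _ _ _ _ hk]

lemma emod_eq (a b : ℤ) : a - a / b * b = a % b := by
  rw [Int.emod_def]; ring

lemma L1 (hG : Gens H) : ∀ n : ℕ, ∀ g : GLZ,
    (g : Matrix (Fin 3) (Fin 3) ℤ) 0 0 = 1 →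
    (g : Matrix (Fin 3) (Fin 3) ℤ) 1 0 = 0 →
    (g : Matrix (Fin 3) (Fin 3) ℤ) 2 0 = 0 →
    ((g : Matrix (Fin 3) (Fin 3) ℤ) 1 1).natAbs
      + ((g : Matrix (Fin 3) (Fin 3) ℤ) 2 1).natAbs ≤ n → g ∈ H := by
  intro n
  induction n with
  | zero =>
    intro g h00 h10 h20 hn
    exact L0 hG g h00 h10 h20 (by omega)
  | succ n ih =>
    intro g h00 h10 h20 hn
    by_cases h21 : (g : Matrix (Fin 3) (Fin 3) ℤ) 2 1 = 0
    · exact L0 hG g h00 h10 h20 h21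
    by_cases h11 : (g : Matrix (Fin 3) (Fin 3) ℤ) 1 1 = 0
    · obtain ⟨w, hw, hwm⟩ := hG.p12
      refine mem_of_mul_mem hw (L0 hG (w * g) ?_ ?_ ?_ ?_) <;>
        simp [hwm, Matrix.mul_apply, Fin.sum_univ_three, h00, h10, h20, h11, vecHead, vecTail]
    · rcases le_or_gt ((g : Matrix (Fin 3) (Fin 3) ℤ) 1 1).natAbs
        ((g : Matrix (Fin 3) (Fin 3) ℤ) 2 1).natAbs with hle | hlt
      · obtain ⟨w, hw, hi, hk⟩ := eustep hG 2 1 (by decide) 1 g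
        refine mem_of_mul_mem hw (ih (w * g) ?_ ?_ ?_ ?_)
        · rw [hk 0 0 (by decide)]; exact h00
        · rw [hk 1 0 (by decide)]; exact h10
        · rw [hi 0, h20, h10]; ring
        · rw [hk 1 1 (by decide), hi 1, emod_eq]
          have := natAbs_emod_lt ((g : Matrix (Fin 3) (Fin 3) ℤ) 2 1)
            ((g : Matrix (Fin 3) (Fin 3) ℤ) 1 1) h11
          omega
      · obtain ⟨w, hw, hi, hk⟩ := eustep hG 1 2 (by decide) 1 g
        refine mem_of_mul_mem hw (ih (w * g) ?_ ?_ ?_ ?_)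
        · rw [hk 0 0 (by decide)]; exact h00
        · rw [hi 0, h10, h20]; ring
        · rw [hk 2 0 (by decide)]; exact h20
        · rw [hk 2 1 (by decide), hi 1, emod_eq]
          have := natAbs_emod_lt ((g : Matrix (Fin 3) (Fin 3) ℤ) 1 1)
            ((g : Matrix (Fin 3) (Fin 3) ℤ) 2 1) h21
          omega
end Stmt12Aux
namespace Stmt12Aux
variable {H : Subgroup GLZ}

lemma L1' (hG : Gens H) (g : GLZ)
    (h00 : (g : Matrix (Fin 3) (Fin 3) ℤ) 0 0 = 1 ∨ (g : Matrix (Fin 3) (Fin 3) ℤ) 0 0 = -1)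
    (h10 : (g : Matrix (Fin 3) (Fin 3) ℤ) 1 0 = 0)
    (h20 : (g : Matrix (Fin 3) (Fin 3) ℤ) 2 0 = 0) : g ∈ H := by
  rcases h00 with h00 | h00
  · exact L1 hG _ g h00 h10 h20 le_rfl
  · obtain ⟨w, hw, hwm⟩ := hG.s0
    refine mem_of_mul_mem hw (L1 hG _ (w * g) ?_ ?_ ?_ le_rfl) <;>
      simp [hwm, Matrix.mul_apply, Fin.sum_univ_three, h00, h10, h20, vecHead, vecTail]

lemma L2 (hG : Gens H) : ∀ n : ℕ, ∀ g : GLZ,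
    ((g : Matrix (Fin 3) (Fin 3) ℤ) 0 0).natAbs + ((g : Matrix (Fin 3) (Fin 3) ℤ) 1 0).natAbs
      + ((g : Matrix (Fin 3) (Fin 3) ℤ) 2 0).natAbs ≤ n → g ∈ H := by
  intro n
  induction n with
  | zero =>
    intro g hn
    exfalso
    have h0 : (g : Matrix (Fin 3) (Fin 3) ℤ).det = 0 := by
      rw [Matrix.det_fin_three,
        show (g : Matrix (Fin 3) (Fin 3) ℤ) 0 0 = 0 by omega,
        show (g : Matrix (Fin 3) (Fin 3) ℤ) 1 0 = 0 by omega,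
        show (g : Matrix (Fin 3) (Fin 3) ℤ) 2 0 = 0 by omega]
      ring
    have := isUnit_det g
    rw [h0] at this
    simp at this
  | succ n ih =>
    intro g hn
    by_cases hb : (g : Matrix (Fin 3) (Fin 3) ℤ) 1 0 = 0 <;>
      by_cases hc : (g : Matrix (Fin 3) (Fin 3) ℤ) 2 0 = 0
    · -- b = 0, c = 0 : a is a unit
      refine L1' hG g (Int.isUnit_iff.mp (isUnit_of_dvd_unit ?_ (isUnit_det g))) hb hc
      exact ⟨(g : Matrix (Fin 3) (Fin 3) ℤ) 1 1 * (g : Matrix (Fin 3) (Fin 3) ℤ) 2 2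
          - (g : Matrix (Fin 3) (Fin 3) ℤ) 1 2 * (g : Matrix (Fin 3) (Fin 3) ℤ) 2 1,
        by rw [Matrix.det_fin_three, hb, hc]; ring⟩
    · -- b = 0, c ≠ 0
      by_cases ha : (g : Matrix (Fin 3) (Fin 3) ℤ) 0 0 = 0
      · -- swap rows 0 and 2
        obtain ⟨w, hw, hwm⟩ := hG.p02
        have hu : IsUnit ((g : Matrix (Fin 3) (Fin 3) ℤ) 2 0) := by
          refine isUnit_of_dvd_unit ?_ (isUnit_det g)
          exact ⟨(g : Matrix (Fin 3) (Fin 3) ℤ) 0 1 * (g : Matrix (Fin 3) (Fin 3) ℤ) 1 2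
              - (g : Matrix (Fin 3) (Fin 3) ℤ) 0 2 * (g : Matrix (Fin 3) (Fin 3) ℤ) 1 1,
            by rw [Matrix.det_fin_three, ha, hb]; ring⟩
        refine mem_of_mul_mem hw (L1' hG (w * g) ?_ ?_ ?_) <;>
          simp [hwm, Matrix.mul_apply, Fin.sum_univ_three, ha, hb, vecHead, vecTail]
        exact Int.isUnit_iff.mp hu
      · rcases le_or_gt ((g : Matrix (Fin 3) (Fin 3) ℤ) 0 0).natAbs
          ((g : Matrix (Fin 3) (Fin 3) ℤ) 2 0).natAbs with hle | hlt
        · obtain ⟨w, hw, hi, hk⟩ := eustep hG 2 0 (by decide) 0 g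
          refine mem_of_mul_mem hw (ih (w * g) ?_)
          rw [hk 0 0 (by decide), hk 1 0 (by decide), hi 0, emod_eq]
          have := natAbs_emod_lt ((g : Matrix (Fin 3) (Fin 3) ℤ) 2 0)
            ((g : Matrix (Fin 3) (Fin 3) ℤ) 0 0) ha
          omega
        · obtain ⟨w, hw, hi, hk⟩ := eustep hG 0 2 (by decide) 0 g
          refine mem_of_mul_mem hw (ih (w * g) ?_)
          rw [hk 1 0 (by decide), hk 2 0 (by decide), hi 0, emod_eq]
          have := natAbs_emod_lt ((g : Matrix (Fin 3) (Fin 3) ℤ) 0 0)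
            ((g : Matrix (Fin 3) (Fin 3) ℤ) 2 0) hc
          omega
    · -- b ≠ 0, c = 0
      by_cases ha : (g : Matrix (Fin 3) (Fin 3) ℤ) 0 0 = 0
      · obtain ⟨w, hw, hwm⟩ := hG.p01
        have hu : IsUnit ((g : Matrix (Fin 3) (Fin 3) ℤ) 1 0) := by
          refine isUnit_of_dvd_unit ?_ (isUnit_det g)
          exact ⟨(g : Matrix (Fin 3) (Fin 3) ℤ) 0 2 * (g : Matrix (Fin 3) (Fin 3) ℤ) 2 1
              - (g : Matrix (Fin 3) (Fin 3) ℤ) 0 1 * (g : Matrix (Fin 3) (Fin 3) ℤ) 2 2,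
            by rw [Matrix.det_fin_three, ha, hc]; ring⟩
        refine mem_of_mul_mem hw (L1' hG (w * g) ?_ ?_ ?_) <;>
          simp [hwm, Matrix.mul_apply, Fin.sum_univ_three, ha, hc, vecHead, vecTail]
        exact Int.isUnit_iff.mp hu
      · rcases le_or_gt ((g : Matrix (Fin 3) (Fin 3) ℤ) 0 0).natAbs
          ((g : Matrix (Fin 3) (Fin 3) ℤ) 1 0).natAbs with hle | hlt
        · obtain ⟨w, hw, hi, hk⟩ := eustep hG 1 0 (by decide) 0 g
          refine mem_of_mul_mem hw (ih (w * g) ?_)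
          rw [hk 0 0 (by decide), hk 2 0 (by decide), hi 0, emod_eq]
          have := natAbs_emod_lt ((g : Matrix (Fin 3) (Fin 3) ℤ) 1 0)
            ((g : Matrix (Fin 3) (Fin 3) ℤ) 0 0) ha
          omega
        · obtain ⟨w, hw, hi, hk⟩ := eustep hG 0 1 (by decide) 0 g
          refine mem_of_mul_mem hw (ih (w * g) ?_)
          rw [hk 1 0 (by decide), hk 2 0 (by decide), hi 0, emod_eq]
          have := natAbs_emod_lt ((g : Matrix (Fin 3) (Fin 3) ℤ) 0 0)
            ((g : Matrix (Fin 3) (Fin 3) ℤ) 1 0) hb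
          omega
    · -- b ≠ 0, c ≠ 0
      rcases le_or_gt ((g : Matrix (Fin 3) (Fin 3) ℤ) 1 0).natAbs
        ((g : Matrix (Fin 3) (Fin 3) ℤ) 2 0).natAbs with hle | hlt
      · obtain ⟨w, hw, hi, hk⟩ := eustep hG 2 1 (by decide) 0 g
        refine mem_of_mul_mem hw (ih (w * g) ?_)
        rw [hk 0 0 (by decide), hk 1 0 (by decide), hi 0, emod_eq]
        have := natAbs_emod_lt ((g : Matrix (Fin 3) (Fin 3) ℤ) 2 0)
          ((g : Matrix (Fin 3) (Fin 3) ℤ) 1 0) hb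
        omega
      · obtain ⟨w, hw, hi, hk⟩ := eustep hG 1 2 (by decide) 0 g
        refine mem_of_mul_mem hw (ih (w * g) ?_)
        rw [hk 0 0 (by decide), hk 2 0 (by decide), hi 0, emod_eq]
        have := natAbs_emod_lt ((g : Matrix (Fin 3) (Fin 3) ℤ) 1 0)
          ((g : Matrix (Fin 3) (Fin 3) ℤ) 2 0) hc
        omega

lemma mem_all (hG : Gens H) (g : GLZ) : g ∈ H := L2 hG _ g le_rfl

end Stmt12Aux

/-- `GL₃(ℤ)` is generated by the four matrices
`A₁ = [[1,1,0],[0,1,0],[0,0,1]]`, `A₂ = [[0,1,0],[−1,0,0],[0,0,1]]`,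
`A₃ = [[−1,0,0],[0,1,0],[0,0,1]]`, `A₄ = [[0,0,−1],[1,0,0],[0,1,0]]`. -/
theorem stmt_12 (A1 A2 A3 A4 : GL (Fin 3) ℤ)
    (h1 : (A1 : Matrix (Fin 3) (Fin 3) ℤ) = !![1, 1, 0; 0, 1, 0; 0, 0, 1])
    (h2 : (A2 : Matrix (Fin 3) (Fin 3) ℤ) = !![0, 1, 0; -1, 0, 0; 0, 0, 1])
    (h3 : (A3 : Matrix (Fin 3) (Fin 3) ℤ) = !![-1, 0, 0; 0, 1, 0; 0, 0, 1])
    (h4 : (A4 : Matrix (Fin 3) (Fin 3) ℤ) = !![0, 0, -1; 1, 0, 0; 0, 1, 0]) :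
    Subgroup.closure {A1, A2, A3, A4} = (⊤ : Subgroup (GL (Fin 3) ℤ)) := by
  exact (Subgroup.eq_top_iff' _).mpr
    (Stmt12Aux.mem_all (Stmt12Aux.gens_closure A1 A2 A3 A4 h1 h2 h3 h4))
end
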